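/- For each p ≥ 2, if a graph G contains no K_p⁻ (the complete graph on p vertices minus one edge) as an induced minor, then the Hadwiger number of G satisfies η(G) ≤ max{2p − 4, ω(G)}. -/

import Mathlib

open SimpleGraph

/-- `X` is a minor model of `H` in `G`: pairwise disjoint connected bags, with an edge of `G`
between the bags of any two adjacent vertices of `H`. -/
def IsMinorModel {α V : Type*} (H : SimpleGraph α) (G : SimpleGraph V) (X : α → Set V) : Prop :=
  (∀ u v, u ≠ v → Disjoint (X u) (X v)) ∧
  (∀ u, (G.induce (X u)).Connected) ∧
  (∀ ⦃u v⦄, H.Adj u v → ∃ a ∈ X u, ∃ b ∈ X v, G.Adj a b)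

/-- `X` is an induced minor model of `H` in `G`: pairwise disjoint connected bags, with an edge
of `G` between two bags if and only if the corresponding vertices of `H` are adjacent. -/
def IsInducedMinorModel {α V : Type*} (H : SimpleGraph α) (G : SimpleGraph V)
    (X : α → Set V) : Prop :=
  (∀ u v, u ≠ v → Disjoint (X u) (X v)) ∧
  (∀ u, (G.induce (X u)).Connected) ∧
  (∀ u v, u ≠ v → ((∃ a ∈ X u, ∃ b ∈ X v, G.Adj a b) ↔ H.Adj u v))

/-- `G` contains `H` as a minor. -/
def HasMinor {V α : Type*} (G : SimpleGraph V) (H : SimpleGraph α) : Prop :=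
  ∃ X, IsMinorModel H G X

/-- `G` contains `H` as an induced minor. -/
def HasInducedMinor {V α : Type*} (G : SimpleGraph V) (H : SimpleGraph α) : Prop :=
  ∃ X, IsInducedMinorModel H G X

/-- The Hadwiger number of `G`: the largest `p` such that `K_p` is a minor of `G`. -/
noncomputable def hadwigerNumber {V : Type*} (G : SimpleGraph V) : ℕ :=
  sSup {p | HasMinor G (⊤ : SimpleGraph (Fin p))}

private lemma reach_induce {V : Type*} {G : SimpleGraph V} {s t : Set V} {a b : ↥s}
    (W : (G.induce s).Walk a b) :
    (∀ x ∈ W.support, (x : V) ∈ t) → ∀ (ha : (a : V) ∈ t) (hb : (b : V) ∈ t),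
      (G.induce t).Reachable ⟨a, ha⟩ ⟨b, hb⟩ := by
  induction W with
  | nil => intro _ ha hb; exact Reachable.refl _
  | @cons x y z hxy p ih =>
    intro hW ha hb
    have hy : (y : V) ∈ t := hW y (by simp)
    have hadj : (G.induce t).Adj ⟨(x : V), ha⟩ ⟨(y : V), hy⟩ := hxy
    exact hadj.reachable.trans (ih (fun q hq => hW q (by simp [hq])) hy hb)

private lemma exists_noncut {V : Type} [Fintype V] {G : SimpleGraph V} {s : Set V}
    (hc : (G.induce s).Connected) (h2 : 1 < s.ncard) :
    ∃ u ∈ s, ∃ w ∈ s, u ≠ w ∧ (G.induce (s \ {u})).Connected ∧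
      (G.induce (s \ {w})).Connected := by
  classical
  have hsfin : s.Finite := s.toFinite
  haveI : Fintype ↥s := hsfin.fintype
  obtain ⟨x, y, hx, hy, hxy⟩ := (Set.one_lt_ncard_iff hsfin).mp h2
  haveI : Nonempty (↥s × ↥s) := ⟨(⟨x, hx⟩, ⟨x, hx⟩)⟩
  obtain ⟨⟨u, w⟩, hmax⟩ := Finite.exists_max (fun q : ↥s × ↥s => (G.induce s).dist q.1 q.2)
  set H := G.induce s with hH
  have hdistpos : 1 ≤ H.dist u w := by
    have h1 := hmax (⟨x, hx⟩, ⟨y, hy⟩)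
    have h2' : 1 ≤ H.dist ⟨x, hx⟩ ⟨y, hy⟩ :=
      hc.pos_dist_of_ne (by simp [Subtype.ext_iff, hxy])
    simp only at h1
    omega
  have huw : u ≠ w := by
    rintro rfl
    rw [SimpleGraph.dist_self] at hdistpos
    omega
  have key : ∀ (a b : ↥s), a ≠ b → (∀ q : ↥s × ↥s, H.dist q.1 q.2 ≤ H.dist a b) →
      (G.induce (s \ {(a : V)})).Connected := by
    intro a b hab hm
    have hbmem : (b : V) ∈ s \ {(a : V)} :=
      ⟨b.2, fun hb' => hab (Subtype.ext (by simpa using hb')).symm⟩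
    have hall : ∀ z : ↥(s \ {(a : V)}), (G.induce (s \ {(a : V)})).Reachable z ⟨b, hbmem⟩ := by
      rintro ⟨zv, hzs, hza⟩
      set x : ↥s := ⟨zv, hzs⟩ with hxdef
      have hxa : x ≠ a := fun e => hza (by simpa using congrArg Subtype.val e)
      obtain ⟨W, hWlen⟩ := hc.exists_walk_length_eq_dist x b
      have hanotin : a ∉ W.support := by
        intro hmem
        have h1 : H.dist x a ≤ (W.takeUntil a hmem).length := SimpleGraph.dist_le _
        have h2' : H.dist a b ≤ (W.dropUntil a hmem).length := SimpleGraph.dist_le _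
        have h3 : (W.takeUntil a hmem).length + (W.dropUntil a hmem).length = W.length := by
          rw [← SimpleGraph.Walk.length_append, SimpleGraph.Walk.take_spec]
        have h4 : 1 ≤ H.dist x a := hc.pos_dist_of_ne hxa
        have h5 : H.dist x b ≤ H.dist a b := hm (x, b)
        omega
      have hsupp : ∀ q ∈ W.support, (q : V) ∈ s \ {(a : V)} := by
        intro q hq
        exact ⟨q.2, fun he => hanotin (by rwa [show q = a from Subtype.ext (by simpa using he)] at hq)⟩
      exact reach_induce W hsupp ⟨hzs, hza⟩ hbmem
    haveI : Nonempty ↥(s \ {(a : V)}) := ⟨⟨b, hbmem⟩⟩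
    exact ⟨fun z1 z2 => (hall z1).trans (hall z2).symm⟩
  refine ⟨u, u.2, w, w.2, fun e => huw (Subtype.ext e), key u w huw hmax, key w u huw.symm ?_⟩
  intro q
  exact (hmax q).trans (le_of_eq (SimpleGraph.dist_comm))

private lemma key_bound {V : Type} [Fintype V] (p q : ℕ) (hp : 2 ≤ p) (G : SimpleGraph V)
    (h : ¬ HasInducedMinor G
      ((⊤ : SimpleGraph (Fin p)).deleteEdges
        {s((⟨0, Nat.lt_of_lt_of_le Nat.zero_lt_two hp⟩ : Fin p), (⟨1, Nat.lt_of_lt_of_le Nat.one_lt_two hp⟩ : Fin p))}))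
    (hq : HasMinor G (⊤ : SimpleGraph (Fin q))) :
    q ≤ max (2 * p - 4) G.cliqueNum := by
  classical
  by_contra hcon
  obtain ⟨hq1, hq2⟩ := max_lt_iff.mp (not_le.mp hcon)
  -- minimal model
  obtain ⟨X, hX, hXmin⟩ : ∃ X, IsMinorModel ⊤ G X ∧
      ∀ Y, IsMinorModel ⊤ G Y → ∑ i, (X i).ncard ≤ ∑ i, (Y i).ncard := by
    have hMne : Set.Nonempty {n | ∃ X : Fin q → Set V, IsMinorModel ⊤ G X ∧
        ∑ i, (X i).ncard = n} := by
      obtain ⟨X, hX⟩ := hq; exact ⟨_, X, hX, rfl⟩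
    obtain ⟨X, hX, hXeq⟩ := Nat.sInf_mem hMne
    refine ⟨X, hX, fun Y hY => hXeq ▸ Nat.sInf_le ?_⟩
    exact ⟨Y, hY, rfl⟩
  obtain ⟨hdisj, hconn, hadj⟩ := hX
  have hne : ∀ i, (X i).Nonempty := by
    intro i
    obtain ⟨⟨v, hv⟩⟩ := (hconn i).nonempty
    exact ⟨v, hv⟩
  have hcard : ∀ i, 1 ≤ (X i).ncard := fun i => (Set.ncard_pos (Set.toFinite _)).mpr (hne i)
  have hedge : ∀ i j, i ≠ j → ∃ a ∈ X i, ∃ b ∈ X j, G.Adj a b := by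
    intro i j hij
    exact hadj ((SimpleGraph.top_adj i j).mpr hij)
  by_cases hsing : ∀ i, (X i).ncard = 1
  · -- all singletons: q ≤ cliqueNum
    choose f hf using fun i => Set.ncard_eq_one.mp (hsing i)
    have hinj : Function.Injective f := by
      intro i j hij'
      by_contra hne'
      have hd := hdisj i j hne'
      rw [hf i, hf j, hij'] at hd
      simp at hd
    have hcl : G.IsNClique q (Finset.univ.image f) := by
      constructor
      · intro a ha b hb hab
        simp only [Finset.coe_image, Finset.coe_univ, Set.image_univ, Set.mem_range] at ha hb
        obtain ⟨i, rfl⟩ := ha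
        obtain ⟨j, rfl⟩ := hb
        obtain ⟨a', ha', b', hb', hGab⟩ := hedge i j (fun e => hab (by rw [e]))
        rw [hf i, Set.mem_singleton_iff] at ha'
        rw [hf j, Set.mem_singleton_iff] at hb'
        rw [← ha', ← hb']
        exact hGab
      · rw [Finset.card_image_of_injective _ hinj, Finset.card_univ, Fintype.card_fin]
    have hle : q ≤ G.cliqueNum := hcl.2 ▸ hcl.1.card_le_cliqueNum
    omega
  · push_neg at hsing
    obtain ⟨i0, hi0⟩ := hsing
    have hB2 : 2 ≤ (X i0).ncard := by have := hcard i0; omega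
    have hω1 : 1 ≤ G.cliqueNum := by
      obtain ⟨v, hv⟩ := hne i0
      have h1 : G.IsNClique 1 {v} := by simp
      calc 1 = ({v} : Finset V).card := by simp
        _ ≤ G.cliqueNum := h1.1.card_le_cliqueNum
    obtain ⟨u, hu, w, hw, huw, hcu, hcw⟩ := exists_noncut (hconn i0) (by omega)
    -- minimality: removing a removable vertex must break some adjacency
    have getJ : ∀ c ∈ X i0, (G.induce (X i0 \ {c})).Connected →
        ∃ jc, jc ≠ i0 ∧ ¬ ∃ a ∈ X jc, ∃ b ∈ X i0 \ {c}, G.Adj a b := by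
      intro c hc hconn'
      by_contra hno
      push_neg at hno
      set X' := Function.update X i0 (X i0 \ {c}) with hX'
      have hmodel : IsMinorModel (⊤ : SimpleGraph (Fin q)) G X' := by
        refine ⟨?_, ?_, ?_⟩
        · intro i j hij
          rcases eq_or_ne i0 i with rfl | hi <;> rcases eq_or_ne i0 j with rfl | hj
          · exact absurd rfl hij
          · rw [hX', Function.update_self, Function.update_of_ne hj.symm]
            exact (hdisj _ _ hij).mono_left Set.diff_subset
          · rw [hX', Function.update_self, Function.update_of_ne hi.symm]
            exact (hdisj _ _ hij).mono_right Set.diff_subset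
          · rw [hX', Function.update_of_ne hi.symm, Function.update_of_ne hj.symm]
            exact hdisj _ _ hij
        · intro i
          rcases eq_or_ne i0 i with rfl | hi
          · rw [hX', Function.update_self]; exact hconn'
          · rw [hX', Function.update_of_ne hi.symm]; exact hconn i
        · intro i j hijadj
          have hij : i ≠ j := hijadj.ne
          rcases eq_or_ne i0 i with rfl | hi <;> rcases eq_or_ne i0 j with rfl | hj
          · exact absurd rfl hij
          · rw [hX', Function.update_self, Function.update_of_ne hj.symm]
            obtain ⟨a, ha, b, hb, hab⟩ := hno j hj.symm
            exact ⟨b, hb, a, ha, hab.symm⟩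
          · rw [hX', Function.update_self, Function.update_of_ne hi.symm]
            exact hno i hi.symm
          · rw [hX', Function.update_of_ne hi.symm, Function.update_of_ne hj.symm]
            exact hedge i j hij
      have hlt : ∑ i, (X' i).ncard < ∑ i, (X i).ncard := by
        refine Finset.sum_lt_sum (fun i _ => ?_) ⟨i0, Finset.mem_univ _, ?_⟩
        · rcases eq_or_ne i0 i with rfl | hi
          · rw [hX', Function.update_self]
            exact Set.ncard_le_ncard Set.diff_subset (Set.toFinite _)
          · rw [hX', Function.update_of_ne hi.symm]
        · rw [hX', Function.update_self]
          exact Set.ncard_diff_singleton_lt_of_mem hc (Set.toFinite _)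
      exact absurd (hXmin X' hmodel) (by omega)
    classical
    set F : V → Finset (Fin q) := fun c => Finset.univ.filter
      (fun j => j ≠ i0 ∧ ¬ ∃ a ∈ X j, ∃ b ∈ X i0 \ {c}, G.Adj a b) with hF
    set S : V → Finset (Fin q) := fun c => Finset.univ.filter
      (fun j => j ≠ i0 ∧ ∃ a ∈ X j, ∃ b ∈ X i0 \ {c}, G.Adj a b) with hS
    have hFS : ∀ c, (F c).card + (S c).card = q - 1 := by
      intro c
      have hunion : F c ∪ S c = Finset.univ.erase i0 := by
        ext j
        simp only [hF, hS, Finset.mem_union, Finset.mem_filter, Finset.mem_univ, true_and,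
          Finset.mem_erase, and_true]
        tauto
      have hdisjFS : Disjoint (F c) (S c) := by
        rw [Finset.disjoint_left]
        intro j hj1 hj2
        rw [hF, Finset.mem_filter] at hj1
        rw [hS, Finset.mem_filter] at hj2
        exact hj1.2.2 hj2.2.2
      have hcu' := Finset.card_union_of_disjoint hdisjFS
      rw [hunion, Finset.card_erase_of_mem (Finset.mem_univ _), Finset.card_univ,
        Fintype.card_fin] at hcu'
      omega
    have swapE : ∀ {A B : Set V}, (∃ a ∈ A, ∃ b ∈ B, G.Adj a b) →
        ∃ a ∈ B, ∃ b ∈ A, G.Adj a b := by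
      rintro A B ⟨a, ha, b, hb, hab⟩
      exact ⟨b, hb, a, ha, hab.symm⟩
    have hKiff : ∀ a b : Fin p,
        ((⊤ : SimpleGraph (Fin p)).deleteEdges
          {s((⟨0, Nat.lt_of_lt_of_le Nat.zero_lt_two hp⟩ : Fin p), (⟨1, Nat.lt_of_lt_of_le Nat.one_lt_two hp⟩ : Fin p))}).Adj a b ↔
        (¬ a.val = b.val ∧ ¬(a.val = 0 ∧ b.val = 1) ∧ ¬(a.val = 1 ∧ b.val = 0)) := by
      intro a b
      simp only [deleteEdges_adj, top_adj, Set.mem_singleton_iff, Sym2.eq_iff, ne_eq,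
        Fin.ext_iff]
      omega
    have goodcase : ∀ c ∈ X i0, (G.induce (X i0 \ {c})).Connected →
        ∀ jc, jc ∈ F c → p - 2 ≤ (S c).card → False := by
      intro c hc hconn' jc hjcF hScard
      rw [hF, Finset.mem_filter] at hjcF
      obtain ⟨-, hjc, hjcno⟩ := hjcF
      obtain ⟨S', hS'sub, hS'card⟩ := Finset.exists_subset_card_eq hScard
      let e : Fin (p - 2) ≃ S' := (Finset.equivFinOfCardEq hS'card).symm
      have htmem : ∀ k : Fin (p - 2), ((e k : Fin q)) ≠ i0 ∧
          ∃ a ∈ X (e k : Fin q), ∃ b ∈ X i0 \ {c}, G.Adj a b := by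
        intro k
        have hk := hS'sub (e k).2
        rw [hS, Finset.mem_filter] at hk
        exact hk.2
      have htne_jc : ∀ k : Fin (p - 2), (e k : Fin q) ≠ jc := by
        intro k he
        exact hjcno (he ▸ (htmem k).2)
      have htinj : ∀ k l : Fin (p - 2), (e k : Fin q) = (e l : Fin q) → k = l := by
        intro k l hkl
        exact e.injective (Subtype.ext hkl)
      set Y : Fin p → Set V := fun a =>
        if h0 : a.val = 0 then X jc else if h1 : a.val = 1 then X i0 \ {c}
        else X (e ⟨a.val - 2, by have := a.isLt; omega⟩ : Fin q) with hYdef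
      have hshape : ∀ a : Fin p, (a.val = 0 ∧ Y a = X jc) ∨ (a.val = 1 ∧ Y a = X i0 \ {c}) ∨
          (∃ k : Fin (p - 2), a.val = k.val + 2 ∧ Y a = X (e k : Fin q)) := by
        intro a
        by_cases h0 : a.val = 0
        · exact Or.inl ⟨h0, by rw [hYdef]; simp [h0]⟩
        by_cases h1 : a.val = 1
        · exact Or.inr (Or.inl ⟨h1, by rw [hYdef]; simp [h0, h1]⟩)
        · refine Or.inr (Or.inr ⟨⟨a.val - 2, by have := a.isLt; omega⟩, by simp; omega, ?_⟩)
          rw [hYdef]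
          simp [h0, h1]
      apply h
      refine ⟨Y, ?_, ?_, ?_⟩
      · intro a b hab
        rcases hshape a with ⟨ha0, hYa⟩ | ⟨ha1, hYa⟩ | ⟨k, hak, hYa⟩ <;>
          rcases hshape b with ⟨hb0, hYb⟩ | ⟨hb1, hYb⟩ | ⟨l, hbl, hYb⟩ <;>
          rw [hYa, hYb]
        · exact absurd (Fin.ext (ha0.trans hb0.symm)) hab
        · exact (hdisj jc i0 hjc).mono_right Set.diff_subset
        · exact hdisj jc _ (fun he => htne_jc l he.symm)
        · exact (hdisj i0 jc (Ne.symm hjc)).mono_left Set.diff_subset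
        · exact absurd (Fin.ext (ha1.trans hb1.symm)) hab
        · exact (hdisj i0 _ (Ne.symm (htmem l).1)).mono_left Set.diff_subset
        · exact hdisj _ jc (htne_jc k)
        · exact (hdisj _ i0 (htmem k).1).mono_right Set.diff_subset
        · refine hdisj _ _ (fun he => hab (Fin.ext ?_))
          rw [hak, hbl, htinj k l he]
      · intro a
        rcases hshape a with ⟨ha0, hYa⟩ | ⟨ha1, hYa⟩ | ⟨k, hak, hYa⟩ <;> rw [hYa]
        · exact hconn jc
        · exact hconn'
        · exact hconn _
      · intro a b hab
        have habv : a.val ≠ b.val := fun he => hab (Fin.ext he)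
        rcases hshape a with ⟨ha0, hYa⟩ | ⟨ha1, hYa⟩ | ⟨k, hak, hYa⟩ <;>
          rcases hshape b with ⟨hb0, hYb⟩ | ⟨hb1, hYb⟩ | ⟨l, hbl, hYb⟩ <;>
          rw [hYa, hYb, hKiff]
        · omega
        · exact iff_of_false hjcno (by omega)
        · refine iff_of_true ?_ (by omega)
          exact hedge jc _ (fun he => htne_jc l he.symm)
        · exact iff_of_false (fun he => hjcno (swapE he)) (by omega)
        · omega
        · exact iff_of_true (swapE (htmem l).2) (by omega)
        · refine iff_of_true ?_ (by omega)
          exact hedge _ jc (htne_jc k)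
        · exact iff_of_true (htmem k).2 (by omega)
        · have hkl : k ≠ l := by
            intro he
            rw [he] at hak
            omega
          have hklv : k.val ≠ l.val := fun hv => hkl (Fin.ext hv)
          refine iff_of_true ?_ (by omega)
          exact hedge _ _ (fun he => hkl (htinj k l he))
    obtain ⟨ju, hjuF⟩ : ∃ j, j ∈ F u := by
      obtain ⟨j, hj1, hj2⟩ := getJ u hu hcu
      exact ⟨j, by rw [hF, Finset.mem_filter]; exact ⟨Finset.mem_univ _, hj1, hj2⟩⟩
    obtain ⟨jw, hjwF⟩ : ∃ j, j ∈ F w := by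
      obtain ⟨j, hj1, hj2⟩ := getJ w hw hcw
      exact ⟨j, by rw [hF, Finset.mem_filter]; exact ⟨Finset.mem_univ _, hj1, hj2⟩⟩
    by_cases hSu : p - 2 ≤ (S u).card
    · exact goodcase u hu hcu ju hjuF hSu
    by_cases hSw : p - 2 ≤ (S w).card
    · exact goodcase w hw hcw jw hjwF hSw
    rw [not_le] at hSu hSw
    have hdisjF : Disjoint (F u) (F w) := by
      rw [Finset.disjoint_left]
      intro j hju hjw
      rw [hF, Finset.mem_filter] at hju hjw
      obtain ⟨a, ha, b, hb, hab⟩ := hedge j i0 hju.2.1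
      have hbu : b = u := by
        by_contra hbu
        exact hju.2.2 ⟨a, ha, b, ⟨hb, hbu⟩, hab⟩
      have hbw : b = w := by
        by_contra hbw
        exact hjw.2.2 ⟨a, ha, b, ⟨hb, hbw⟩, hab⟩
      exact huw (hbu ▸ hbw)
    have hcardFF : (F u).card + (F w).card ≤ q - 1 := by
      have h1 : F u ∪ F w ⊆ Finset.univ.erase i0 := by
        intro j hj
        rw [Finset.mem_union] at hj
        rw [Finset.mem_erase]
        rcases hj with hj | hj <;> rw [hF, Finset.mem_filter] at hj <;>
          exact ⟨hj.2.1, Finset.mem_univ _⟩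
      have h2 := Finset.card_le_card h1
      rw [Finset.card_union_of_disjoint hdisjF, Finset.card_erase_of_mem (Finset.mem_univ _),
        Finset.card_univ, Fintype.card_fin] at h2
      exact h2
    have e1 := hFS u
    have e2 := hFS w
    omega


/-- If `G` has no `K_p⁻` (complete graph on `p ≥ 2` vertices minus an edge) induced minor,
then its Hadwiger number is at most `max (2p - 4) ω(G)`. -/
theorem hadwiger_le_of_no_Kp_minus_inducedMinor {V : Type} [Fintype V] (p : ℕ) (hp : 2 ≤ p)
    (G : SimpleGraph V)
    (h : ¬ HasInducedMinor G
      ((⊤ : SimpleGraph (Fin p)).deleteEdges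
        {s((⟨0, by omega⟩ : Fin p), (⟨1, by omega⟩ : Fin p))})) :
    hadwigerNumber G ≤ max (2 * p - 4) G.cliqueNum := by
  classical
  refine csSup_le ⟨0, ?_⟩ (fun q hq => key_bound p q hp G h hq)
  refine ⟨Fin.elim0, fun u => u.elim0, fun u => u.elim0, fun u v huv => u.elim0⟩
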